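/- Let V be an F-vector space with a non-archimedean norm and B a countably dimensional F-algebra with F-basis {t_n}. Define a norm on B⊗V by ‖x‖ = inf over representations x = Σ b_i⊗v_i of max|v_i|. Then for x = Σ t_n⊗v_n (finitely many v_n nonzero), ‖x‖ = max_n |v_n|. -/

import Mathlib

open TensorProduct

/-- for the infimum norm on `B ⊗[F] V`, the norm of an element written in a
basis `t` of `B` as `∑ n, t n ⊗ v n` (finitely many `v n` nonzero) is `max_n ‖v n‖`. -/
theorem stmt0 (F : Type*) [Field F]
    (V : Type*) [AddCommGroup V] [Module F V]
    (B : Type*) [CommRing B] [Algebra F B]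
    (ν : V → ℝ) (hν0 : ν 0 = 0) (hνnonneg : ∀ v, 0 ≤ ν v)
    (hνna : ∀ v w, ν (v + w) ≤ max (ν v) (ν w))
    (hνsmul : ∀ (c : F) (v : V), c ≠ 0 → ν (c • v) = ν v)
    (t : Module.Basis ℕ F B)
    (Nrm : B ⊗[F] V → ℝ)
    (hNrm : ∀ x : B ⊗[F] V,
      Nrm x = sInf { r : ℝ | ∃ (n : ℕ) (b : Fin n → B) (w : Fin n → V),
        x = ∑ i, b i ⊗ₜ[F] w i ∧ r = ⨆ i, ν (w i) })
    (v : ℕ →₀ V) :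
    Nrm (v.sum fun n vn => t n ⊗ₜ[F] vn) = ⨆ n, ν (v n) := by
  classical
  set S : Set ℝ := { r : ℝ | ∃ (n : ℕ) (b : Fin n → B) (w : Fin n → V),
      (v.sum fun n vn => t n ⊗ₜ[F] vn) = ∑ i, b i ⊗ₜ[F] w i ∧ r = ⨆ i, ν (w i) } with hS
  rw [hNrm]
  -- boundedness of the range of `fun n => ν (v n)`
  have hbdd : BddAbove (Set.range fun n => ν (v n)) := by
    apply Set.Finite.bddAbove
    apply Set.Finite.subset
      (Set.Finite.insert 0 ((v.support : Set ℕ).toFinite.image fun n => ν (v n)))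
    rintro r ⟨n, rfl⟩
    by_cases hn : n ∈ v.support
    · exact Set.mem_insert_of_mem _ ⟨n, hn, rfl⟩
    · simp [Finsupp.notMem_support_iff.mp hn, hν0]
  have hM0 : 0 ≤ ⨆ n, ν (v n) := le_trans (hνnonneg (v 0)) (le_ciSup hbdd 0)
  -- nonarchimedean bound on sums
  have hsum : ∀ {ι : Type} (s : Finset ι) (u : ι → V) (r : ℝ), 0 ≤ r →
      (∀ i ∈ s, ν (u i) ≤ r) → ν (∑ i ∈ s, u i) ≤ r := by
    intro ι s u r hr
    induction s using Finset.cons_induction with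
    | empty => intro _; simpa [hν0]
    | cons a s ha ih =>
      intro h
      rw [Finset.sum_cons]
      exact le_trans (hνna _ _) (max_le (h a (Finset.mem_cons_self _ _))
        (ih fun i hi => h i (Finset.mem_cons_of_mem hi)))
  -- the coefficient extraction maps
  set φ : ℕ → (B ⊗[F] V →ₗ[F] V) :=
    fun n => TensorProduct.lift ((LinearMap.lsmul F V).comp (t.coord n)) with hφ
  have hφtmul : ∀ (n : ℕ) (b : B) (w : V), φ n (b ⊗ₜ[F] w) = (t.coord n b) • w := by
    intro n b w; simp [hφ]
  have hφx : ∀ n : ℕ, φ n (v.sum fun m vm => t m ⊗ₜ[F] vm) = v n := by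
    intro n
    rw [map_finsuppSum]
    rw [Finsupp.sum]
    have : ∀ m ∈ v.support, φ n (t m ⊗ₜ[F] v m) = if m = n then v m else 0 := by
      intro m _
      rw [hφtmul, Module.Basis.coord_apply, Module.Basis.repr_self, Finsupp.single_apply]
      split <;> simp
    rw [Finset.sum_congr rfl this, Finset.sum_ite_eq' v.support n (fun m => v m)]
    split
    · rfl
    · exact (Finsupp.notMem_support_iff.mp (by assumption)).symm
  -- lower bound: every element of S is ≥ the sup
  have hlower : ∀ r ∈ S, (⨆ n, ν (v n)) ≤ r := by
    rintro r ⟨k, b, w, hxe, rfl⟩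
    have hbddw : BddAbove (Set.range fun i => ν (w i)) := (Set.finite_range _).bddAbove
    have hr0 : 0 ≤ ⨆ i, ν (w i) := by
      rcases isEmpty_or_nonempty (Fin k) with hk | hk
      · simp [Real.iSup_of_isEmpty]
      · obtain ⟨i⟩ := hk
        exact le_trans (hνnonneg (w i)) (le_ciSup hbddw i)
    apply ciSup_le
    intro n
    have hvn : v n = ∑ i, (t.coord n (b i)) • w i := by
      rw [← hφx n, hxe, map_sum]
      exact Finset.sum_congr rfl fun i _ => hφtmul n (b i) (w i)
    rw [hvn]
    apply hsum Finset.univ _ _ hr0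
    intro i _
    by_cases hc : t.coord n (b i) = 0
    · rw [hc, zero_smul, hν0]; exact hr0
    · rw [hνsmul _ _ hc]; exact le_ciSup hbddw i
  -- membership: the sup belongs to S
  have hmem : (⨆ n, ν (v n)) ∈ S := by
    set k := v.support.card with hk
    set e := v.support.equivFin with he
    refine ⟨k, fun i => t ((e.symm i : ℕ)), fun i => v ((e.symm i : ℕ)), ?_, ?_⟩
    · rw [Finsupp.sum]
      rw [← Finset.sum_coe_sort v.support (fun n => t n ⊗ₜ[F] v n)]
      exact (Equiv.sum_comp e.symm (fun a : v.support => t (a : ℕ) ⊗ₜ[F] v (a : ℕ))).symm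
    · rcases isEmpty_or_nonempty (Fin k) with hke | hke
      · have hsupp : v.support = ∅ := by
          rw [← Finset.card_eq_zero]
          have := Fintype.card_fin k ▸ Fintype.card_eq_zero (α := Fin k)
          omega
        have hv0 : ∀ n, v n = 0 := fun n =>
          Finsupp.notMem_support_iff.mp (by simp [hsupp])
        simp [hv0, hν0, Real.iSup_of_isEmpty, ciSup_const]
      · have hbddw : BddAbove (Set.range fun i => ν (v ((e.symm i : ℕ)))) :=
          (Set.finite_range _).bddAbove
        haveI := hke; obtain ⟨i₀⟩ := hke
        have hr0 : 0 ≤ ⨆ i, ν (v ((e.symm i : ℕ))) :=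
          le_trans (hνnonneg _) (le_ciSup hbddw i₀)
        apply le_antisymm
        · apply ciSup_le
          intro n
          by_cases hn : n ∈ v.support
          · have : ν (v n) = ν (v ((e.symm (e ⟨n, hn⟩) : ℕ))) := by
              rw [Equiv.symm_apply_apply]
            rw [this]
            exact le_ciSup hbddw (e ⟨n, hn⟩)
          · rw [Finsupp.notMem_support_iff.mp hn, hν0]
            exact hr0
        · exact ciSup_le fun i => le_ciSup hbdd ((e.symm i : ℕ))
  exact le_antisymm (csInf_le ⟨_, hlower⟩ hmem) (le_csInf ⟨_, hmem⟩ hlower)
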